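/- For discrete random variables V1, U, V2, Y2, M1 on finite sets such that M1 is a deterministic function of V1 (the bin index of the codeword), the following identity/lower bound holds: H(M1 | Y2, U, V2) ≥ H(V1 | U) − I(V1; V2 | U) − H(V1 | M1, U, V2, Y2) − I(V1; Y2 | U, V2). -/
import Mathlib


open Finset Filter MeasureTheory ProbabilityTheory

noncomputable def probEq {Ω A : Type*} [Fintype Ω] [DecidableEq A]
    (p : Ω → ℝ) (f : Ω → A) (a : A) : ℝ :=
  ∑ ω, if f ω = a then p ω else 0

noncomputable def jointProb {Ω A B : Type*} [Fintype Ω] [DecidableEq A] [DecidableEq B]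
    (p : Ω → ℝ) (f : Ω → A) (g : Ω → B) (a : A) (b : B) : ℝ :=
  ∑ ω, if f ω = a ∧ g ω = b then p ω else 0

noncomputable def condEnt {Ω A B : Type*} [Fintype Ω] [Fintype A] [Fintype B]
    [DecidableEq A] [DecidableEq B] (p : Ω → ℝ) (f : Ω → A) (g : Ω → B) : ℝ :=
  -∑ a, ∑ b, jointProb p f g a b * Real.logb 2 (jointProb p f g a b / probEq p g b)

noncomputable def ent {Ω A : Type*} [Fintype Ω] [Fintype A] [DecidableEq A]
    (p : Ω → ℝ) (f : Ω → A) : ℝ :=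
  condEnt p f (fun _ => (() : Unit))

noncomputable def mi {Ω A B : Type*} [Fintype Ω] [Fintype A] [Fintype B]
    [DecidableEq A] [DecidableEq B] (p : Ω → ℝ) (f : Ω → A) (g : Ω → B) : ℝ :=
  ent p f - condEnt p f g

noncomputable def condMI {Ω A B C : Type*} [Fintype Ω] [Fintype A] [Fintype B] [Fintype C]
    [DecidableEq A] [DecidableEq B] [DecidableEq C]
    (p : Ω → ℝ) (f : Ω → A) (g : Ω → B) (h : Ω → C) : ℝ :=
  condEnt p f h - condEnt p f (fun ω => (g ω, h ω))

/-- Relabeling the main variable by an injection does not change conditional entropy. -/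
lemma condEnt_comp_left {Ω A A' B : Type*} [Fintype Ω] [Fintype A] [Fintype A'] [Fintype B]
    [DecidableEq A] [DecidableEq A'] [DecidableEq B]
    (p : Ω → ℝ) (f : Ω → A) (g : Ω → B) (e : A → A') (he : Function.Injective e) :
    condEnt p (fun ω => e (f ω)) g = condEnt p f g := by
  unfold condEnt
  congr 1
  have h1 : ∀ a b, jointProb p (fun ω => e (f ω)) g (e a) b = jointProb p f g a b := by
    intro a b
    unfold jointProb
    refine Finset.sum_congr rfl fun ω _ => ?_
    simp [he.eq_iff]
  have h0 : ∀ a' , a' ∉ Finset.univ.image e →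
      (∑ b, jointProb p (fun ω => e (f ω)) g a' b *
        Real.logb 2 (jointProb p (fun ω => e (f ω)) g a' b / probEq p g b)) = 0 := by
    intro a' ha'
    refine Finset.sum_eq_zero fun b _ => ?_
    have : jointProb p (fun ω => e (f ω)) g a' b = 0 := by
      unfold jointProb
      refine Finset.sum_eq_zero fun ω _ => ?_
      have : e (f ω) ≠ a' := fun h => ha' (by simp [← h])
      simp [this]
    simp [this]
  rw [← Finset.sum_subset (Finset.subset_univ (Finset.univ.image e))
    (fun a' _ ha' => h0 a' ha'),
    Finset.sum_image (fun a _ b _ h => he h)]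
  exact Finset.sum_congr rfl fun a _ => Finset.sum_congr rfl fun b _ => by rw [h1]

/-- Relabeling the conditioning variable by an injection does not change conditional entropy. -/
lemma condEnt_comp_right {Ω A B B' : Type*} [Fintype Ω] [Fintype A] [Fintype B] [Fintype B']
    [DecidableEq A] [DecidableEq B] [DecidableEq B']
    (p : Ω → ℝ) (f : Ω → A) (g : Ω → B) (e : B → B') (he : Function.Injective e) :
    condEnt p f (fun ω => e (g ω)) = condEnt p f g := by
  unfold condEnt
  congr 1
  refine Finset.sum_congr rfl fun a _ => ?_
  have h1 : ∀ a b, jointProb p f (fun ω => e (g ω)) a (e b) = jointProb p f g a b := by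
    intro a b
    unfold jointProb
    refine Finset.sum_congr rfl fun ω _ => ?_
    simp [he.eq_iff]
  have h2 : ∀ b, probEq p (fun ω => e (g ω)) (e b) = probEq p g b := by
    intro b
    unfold probEq
    refine Finset.sum_congr rfl fun ω _ => ?_
    simp [he.eq_iff]
  have h0 : ∀ b', b' ∉ Finset.univ.image e →
      jointProb p f (fun ω => e (g ω)) a b' *
        Real.logb 2 (jointProb p f (fun ω => e (g ω)) a b' / probEq p (fun ω => e (g ω)) b') = 0 := by
    intro b' hb'
    have : jointProb p f (fun ω => e (g ω)) a b' = 0 := by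
      unfold jointProb
      refine Finset.sum_eq_zero fun ω _ => ?_
      have : e (g ω) ≠ b' := fun h => hb' (by simp [← h])
      simp [this]
    simp [this]
  rw [← Finset.sum_subset (Finset.subset_univ (Finset.univ.image e)) (fun b' _ hb' => h0 b' hb'),
    Finset.sum_image (fun a _ b _ h => he h)]
  exact Finset.sum_congr rfl fun b _ => by rw [h1, h2]

/-- Chain rule: H(X,Y | Z) = H(Y|Z) + H(X | Y,Z). -/
lemma condEnt_chain {Ω A B C : Type*} [Fintype Ω] [Fintype A] [Fintype B] [Fintype C]
    [DecidableEq A] [DecidableEq B] [DecidableEq C]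
    (p : Ω → ℝ) (hp : ∀ ω, 0 ≤ p ω)
    (f : Ω → A) (g : Ω → B) (h : Ω → C) :
    condEnt p (fun ω => (f ω, g ω)) h
      = condEnt p g h + condEnt p f (fun ω => (g ω, h ω)) := by
  classical
  set J : A → B → C → ℝ := fun a b c => ∑ ω, if f ω = a ∧ g ω = b ∧ h ω = c then p ω else 0
    with hJdef
  have hJnn : ∀ a b c, 0 ≤ J a b c := by
    intro a b c
    refine Finset.sum_nonneg fun ω _ => ?_
    split
    · exact hp ω
    · exact le_rfl
  have hJfg : ∀ a b c, jointProb p (fun ω => (f ω, g ω)) h (a, b) c = J a b c := by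
    intro a b c
    refine Finset.sum_congr rfl fun ω _ => ?_
    simp [Prod.ext_iff, and_assoc]
  have hJf : ∀ a b c, jointProb p f (fun ω => (g ω, h ω)) a (b, c) = J a b c := by
    intro a b c
    refine Finset.sum_congr rfl fun ω _ => ?_
    simp [Prod.ext_iff]
  have hQ : ∀ b c, jointProb p g h b c = ∑ a, J a b c := by
    intro b c
    rw [hJdef]
    unfold jointProb
    rw [Finset.sum_comm]
    refine Finset.sum_congr rfl fun ω _ => ?_
    simp [ite_and]
  have hPgh : ∀ b c, probEq p (fun ω => (g ω, h ω)) (b, c) = jointProb p g h b c := by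
    intro b c
    refine Finset.sum_congr rfl fun ω _ => ?_
    simp [Prod.ext_iff]
  have hP : ∀ c, probEq p h c = ∑ b, ∑ a, J a b c := by
    intro c
    rw [Finset.sum_congr rfl fun b (_ : b ∈ Finset.univ) => (hQ b c).symm]
    unfold jointProb probEq
    rw [Finset.sum_comm]
    refine Finset.sum_congr rfl fun ω _ => ?_
    simp [ite_and]
  have hQnn : ∀ b c, (0:ℝ) ≤ ∑ a, J a b c := fun b c =>
    Finset.sum_nonneg fun a _ => hJnn a b c
  have hQP : ∀ b c, (∑ a, J a b c) ≤ probEq p h c := by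
    intro b c
    rw [hP c]
    exact Finset.single_le_sum (f := fun b => ∑ a, J a b c) (fun b _ => hQnn b c)
      (Finset.mem_univ b)
  have key : ∀ b c, ∑ a, J a b c * Real.logb 2 (J a b c / probEq p h c)
      = (∑ a, J a b c) * Real.logb 2 ((∑ a, J a b c) / probEq p h c)
        + ∑ a, J a b c * Real.logb 2 (J a b c / (∑ a, J a b c)) := by
    intro b c
    rcases eq_or_lt_of_le (hQnn b c) with hQ0 | hQpos
    · have hall : ∀ a, J a b c = 0 := by
        intro a
        exact (Finset.sum_eq_zero_iff_of_nonneg (fun a _ => hJnn a b c)).1 hQ0.symm a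
          (Finset.mem_univ a)
      simp [hall]
    · have hPpos : 0 < probEq p h c := lt_of_lt_of_le hQpos (hQP b c)
      have step : ∀ a, J a b c * Real.logb 2 (J a b c / probEq p h c)
          = J a b c * Real.logb 2 ((∑ a, J a b c) / probEq p h c)
            + J a b c * Real.logb 2 (J a b c / (∑ a, J a b c)) := by
        intro a
        rcases eq_or_lt_of_le (hJnn a b c) with hJ0 | hJpos
        · rw [← hJ0]; ring
        · rw [Real.logb_div (ne_of_gt hJpos) (ne_of_gt hPpos),
            Real.logb_div (ne_of_gt hQpos) (ne_of_gt hPpos),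
            Real.logb_div (ne_of_gt hJpos) (ne_of_gt hQpos)]
          ring
      rw [Finset.sum_congr rfl fun a _ => step a, Finset.sum_add_distrib, ← Finset.sum_mul]
  have swap3 : ∀ (X : A → B → C → ℝ),
      ∑ a, ∑ b, ∑ c, X a b c = ∑ b, ∑ c, ∑ a, X a b c := by
    intro X
    rw [Finset.sum_comm]
    exact Finset.sum_congr rfl fun b _ => Finset.sum_comm
  unfold condEnt
  simp only [Fintype.sum_prod_type]
  simp only [hJfg, hJf, hPgh, hQ]
  rw [← neg_add]
  congr 1
  rw [swap3 (fun a b c => J a b c * Real.logb 2 (J a b c / probEq p h c)),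
    swap3 (fun a b c => J a b c * Real.logb 2 (J a b c / (∑ a, J a b c)))]
  rw [← Finset.sum_add_distrib]
  refine Finset.sum_congr rfl fun b _ => ?_
  rw [← Finset.sum_add_distrib]
  exact Finset.sum_congr rfl fun c _ => key b c

/-- Equivocation decomposition: if M1 = f(V1), then
H(M1 | Y2, U, V2) >= H(V1 | U) - I(V1;V2|U) - H(V1 | M1, U, V2, Y2) - I(V1;Y2|U,V2). -/
theorem equivocationDecomposition {Ω M V1 V2 U Y2 : Type*} [Fintype Ω] [Fintype M]
    [Fintype V1] [Fintype V2] [Fintype U] [Fintype Y2]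
    [DecidableEq M] [DecidableEq V1] [DecidableEq V2] [DecidableEq U] [DecidableEq Y2]
    (p : Ω → ℝ) (hp : ∀ ω, 0 ≤ p ω) (hsum : ∑ ω, p ω = 1)
    (M1f : Ω → M) (V1f : Ω → V1) (V2f : Ω → V2) (Uf : Ω → U) (Y2f : Ω → Y2)
    (f : V1 → M) (hf : ∀ ω, M1f ω = f (V1f ω)) :
    condEnt p V1f Uf - condMI p V1f V2f Uf
      - condEnt p V1f (fun ω => (M1f ω, Uf ω, V2f ω, Y2f ω))
      - condMI p V1f Y2f (fun ω => (Uf ω, V2f ω))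
    ≤ condEnt p M1f (fun ω => (Y2f ω, Uf ω, V2f ω)) := by
  classical
  -- H(V1 | (U,V2)) = H(V1 | (V2,U))
  have hswap : condEnt p V1f (fun ω => (Uf ω, V2f ω))
      = condEnt p V1f (fun ω => (V2f ω, Uf ω)) := by
    exact condEnt_comp_right p V1f (fun ω => (V2f ω, Uf ω)) Prod.swap Prod.swap_injective
  -- chain rule: H(V1, M1 | Z3) = H(M1 | Z3) + H(V1 | (M1, Z3))
  have hch : condEnt p (fun ω => (V1f ω, M1f ω)) (fun ω => (Y2f ω, Uf ω, V2f ω))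
      = condEnt p M1f (fun ω => (Y2f ω, Uf ω, V2f ω))
        + condEnt p V1f (fun ω => (M1f ω, Y2f ω, Uf ω, V2f ω)) := by
    exact condEnt_chain p hp V1f M1f (fun ω => (Y2f ω, Uf ω, V2f ω))
  -- H(V1, M1 | Z3) = H(V1 | Z3) since M1 = f(V1)
  have hpair : condEnt p (fun ω => (V1f ω, M1f ω)) (fun ω => (Y2f ω, Uf ω, V2f ω))
      = condEnt p V1f (fun ω => (Y2f ω, Uf ω, V2f ω)) := by
    have h1 : (fun ω => (V1f ω, M1f ω)) = (fun ω => ((V1f ω, f (V1f ω)) : V1 × M)) :=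
      funext fun ω => by rw [hf ω]
    rw [h1]
    exact condEnt_comp_left p V1f (fun ω => (Y2f ω, Uf ω, V2f ω))
      (fun v => (v, f v)) (fun a b h => congrArg Prod.fst h)
  -- H(V1 | (M1, Y2, U, V2)) = H(V1 | (M1, U, V2, Y2))
  have he : Function.Injective
      (fun x : M × U × V2 × Y2 => ((x.1, x.2.2.2, x.2.1, x.2.2.1) : M × Y2 × U × V2)) := by
    rintro ⟨a1, a2, a3, a4⟩ ⟨b1, b2, b3, b4⟩ hxy
    simp_all [Prod.ext_iff]
  have hD : condEnt p V1f (fun ω => (M1f ω, Y2f ω, Uf ω, V2f ω))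
      = condEnt p V1f (fun ω => (M1f ω, Uf ω, V2f ω, Y2f ω)) := by
    exact condEnt_comp_right p V1f (fun ω => (M1f ω, Uf ω, V2f ω, Y2f ω))
      (fun x => (x.1, x.2.2.2, x.2.1, x.2.2.1)) he
  simp only [condMI]
  linarith [hswap, hch, hpair, hD]
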